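/- In the group Q ⋊ ℤ (q = 2^f, f odd), let C be the subgroup of Q₈ ⋊ ℤ consisting of pairs (g(1,β,γ), n) with g(1,β,γ) ∈ C₄ if n is even and g(1,β,γ) ∉ C₄ if n is odd, where C₄ is a fixed cyclic subgroup of Q₈ of order 4. Then C has index 2 in Q₈ ⋊ ℤ, and the element (g(1,ζ₃,ζ₃),1) together with (g(1,0,0),2) generates C. -/

import Mathlib

local notation "F" => GaloisField 2 2

noncomputable def gmat (α β γ : GaloisField 2 2) : Matrix (Fin 3) (Fin 3) (GaloisField 2 2) :=
  !![α, β, γ; 0, α^2, β^2; 0, 0, α]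

/-- The subset `Q₈` of `Q`, consisting of elements with `α = 1`. -/
def Q8set : Set (GL (Fin 3) (GaloisField 2 2)) :=
  {M | ∃ β γ : GaloisField 2 2,
    (M : Matrix (Fin 3) (Fin 3) (GaloisField 2 2)) = gmat 1 β γ ∧
    γ ^ 2 + γ = β ^ 3}

/-- The Frobenius (squaring) automorphism of `GL₃(𝔽₄)`, acting entrywise. -/
noncomputable def frobGL : MulAut (GL (Fin 3) (GaloisField 2 2)) :=
  Units.mapEquiv (RingEquiv.mapMatrix (frobeniusEquiv (GaloisField 2 2) 2)).toMulEquiv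

/-- The action of `ℤ` on `GL₃(𝔽₄)` where `n` acts by the entrywise `q^n`-power map,
`q = 2^f`. -/
noncomputable def φ (f : ℕ) : Multiplicative ℤ →* MulAut (GL (Fin 3) (GaloisField 2 2)) :=
  zpowersHom _ (frobGL ^ f)

lemma h2 : (2 : F) = 0 := by
  have := CharP.cast_eq_zero F 2
  exact_mod_cast this

lemma hx4 (x : F) : x ^ 4 = x := by
  have : Fintype F := Fintype.ofFinite _
  have hcard : Fintype.card F = 4 := by
    have := GaloisField.card 2 2 (by norm_num)
    simpa [Nat.card_eq_fintype_card] using this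
  have := FiniteField.pow_card x
  rwa [hcard] at this

lemma field_cases (ζ : F) (hζ : ζ ^ 2 + ζ + 1 = 0) (x : F) :
    x = 0 ∨ x = 1 ∨ x = ζ ∨ x = ζ + 1 := by
  have key : x * (x + 1) * (x + ζ) * (x + (ζ + 1)) = 0 := by
    linear_combination (x^2 + x) * hζ + ((ζ+1)*x^3 + ζ*x^2) * h2 + hx4 x
  rcases mul_eq_zero.1 key with h | h
  · rcases mul_eq_zero.1 h with h | h
    · rcases mul_eq_zero.1 h with h | h
      · exact Or.inl h
      · exact Or.inr (Or.inl (by linear_combination h - h2))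
    · exact Or.inr (Or.inr (Or.inl (by linear_combination h - ζ * h2)))
  · exact Or.inr (Or.inr (Or.inr (by linear_combination h - (ζ+1) * h2)))

lemma gmat_mul (β γ β' γ' : F) :
    gmat 1 β γ * gmat 1 β' γ' = gmat 1 (β + β') (γ + γ' + β * β' ^ 2) := by
  simp only [gmat, Matrix.mul_fin_three]
  congr 1 <;> ext i j <;> fin_cases i <;> fin_cases j <;> simp <;>
    first
      | ring1
      | linear_combination (-(β*β')) * h2


lemma gmat_congr {β γ β' γ' : F} (h1 : β = β') (h2 : γ = γ') :
    gmat 1 β γ = gmat 1 β' γ' := by rw [h1, h2]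

section zeta
variable (ζ : F) (hζ : ζ ^ 2 + ζ + 1 = 0)
include hζ

lemma hz2 : ζ ^ 2 = ζ + 1 := by linear_combination hζ + (-ζ-1) * h2
lemma hz3 : ζ ^ 3 = 1 := by linear_combination (ζ-1) * hζ
lemma hz0 : ζ ≠ 0 := by
  intro h
  exact one_ne_zero (α := F) (by linear_combination hζ - (ζ+1)*h)
lemma hz1 : ζ ≠ 1 := by
  intro h
  exact one_ne_zero (α := F) (by linear_combination hζ - (ζ+2)*h - h2)
end zeta

lemma gmat_one : gmat 1 0 0 = 1 := by
  rw [Matrix.one_fin_three]; simp [gmat]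

lemma gmat_inj {β γ β' γ' : F} (h : gmat 1 β γ = gmat 1 β' γ') : β = β' ∧ γ = γ' :=
  ⟨by have := congrFun (congrFun h 0) 1; simpa [gmat] using this,
   by have := congrFun (congrFun h 0) 2; simpa [gmat] using this⟩

section M
variable (ζ : F) (hζ : ζ ^ 2 + ζ + 1 = 0) (M : GL (Fin 3) F)
  (hM : (M : Matrix (Fin 3) (Fin 3) F) = gmat 1 1 ζ)

include hζ hM

lemma coe_M2 : ((M * M : GL (Fin 3) F) : Matrix (Fin 3) (Fin 3) F) = gmat 1 0 1 := by
  rw [Units.val_mul, hM, gmat_mul]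
  exact gmat_congr (by linear_combination h2) (by linear_combination ζ * h2)

lemma coe_M3 :
    ((M * M * M : GL (Fin 3) F) : Matrix (Fin 3) (Fin 3) F) = gmat 1 1 (ζ + 1) := by
  rw [Units.val_mul, coe_M2 ζ hζ M hM, hM, gmat_mul]
  exact gmat_congr (by ring) (by ring)

lemma M4 : M ^ 4 = 1 := by
  have h : M ^ 4 = M * M * M * M := by rw [pow_succ, pow_succ, pow_succ, pow_one]
  ext : 1
  rw [h, Units.val_mul, coe_M3 ζ hζ M hM, hM, gmat_mul, Units.val_one, ← gmat_one]
  exact gmat_congr (by linear_combination h2) (by linear_combination (ζ+1) * h2)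
end M

section M
variable (ζ : F) (hζ : ζ ^ 2 + ζ + 1 = 0) (M : GL (Fin 3) F)
  (hM : (M : Matrix (Fin 3) (Fin 3) F) = gmat 1 1 ζ)

include hζ hM

lemma zpow_M_cases (k : ℤ) :
    M ^ k = 1 ∨ M ^ k = M ∨ M ^ k = M * M ∨ M ^ k = M * M * M := by
  have h4 : M ^ (4 : ℕ) = 1 := M4 ζ hζ M hM
  have key : M ^ k = M ^ (k % 4) := by
    conv_lhs => rw [← Int.emod_add_mul_ediv k 4]
    rw [zpow_add, zpow_mul, show (4:ℤ) = ((4:ℕ):ℤ) from rfl, zpow_natCast, h4, one_zpow,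
      mul_one]
  have h0 : 0 ≤ k % 4 := Int.emod_nonneg k (by norm_num)
  have h4' : k % 4 < 4 := Int.emod_lt_of_pos k (by norm_num)
  set r := k % 4 with hr
  clear_value r
  interval_cases r
  · left; simpa using key
  · right; left; simpa using key
  · right; right; left
    rw [key, show (2:ℤ) = ((2:ℕ):ℤ) from rfl, zpow_natCast, pow_two]
  · right; right; right
    rw [key, show (3:ℤ) = ((3:ℕ):ℤ) from rfl, zpow_natCast, pow_succ, pow_two]

lemma mem_zpowers_M_iff (u : GL (Fin 3) F) (β γ : F)
    (hu : (u : Matrix (Fin 3) (Fin 3) F) = gmat 1 β γ) (hbg : γ ^ 2 + γ = β ^ 3) :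
    u ∈ Subgroup.zpowers M ↔ (β = 0 ∨ β = 1) := by
  rw [Subgroup.mem_zpowers_iff]
  constructor
  · rintro ⟨k, hk⟩
    rcases zpow_M_cases ζ hζ M hM k with h | h | h | h <;> rw [h] at hk
    · left
      have : gmat 1 0 0 = gmat 1 β γ := by rw [gmat_one, ← hu, ← hk]; rfl
      exact ((gmat_inj this).1).symm
    · right
      have : gmat 1 1 ζ = gmat 1 β γ := by rw [← hM, ← hu, ← hk]
      exact ((gmat_inj this).1).symm
    · left
      have : gmat 1 0 1 = gmat 1 β γ := by rw [← coe_M2 ζ hζ M hM, ← hu, ← hk]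
      exact ((gmat_inj this).1).symm
    · right
      have : gmat 1 1 (ζ+1) = gmat 1 β γ := by rw [← coe_M3 ζ hζ M hM, ← hu, ← hk]
      exact ((gmat_inj this).1).symm
  · rintro (rfl | rfl)
    · have : γ * (γ + 1) = 0 := by linear_combination hbg
      rcases mul_eq_zero.1 this with h | h
      · subst h
        exact ⟨0, Units.ext (by rw [zpow_zero, Units.val_one, hu, gmat_one])⟩
      · have hγ : γ = 1 := by linear_combination h - h2
        subst hγ
        refine ⟨2, Units.ext ?_⟩
        rw [show (2:ℤ) = ((2:ℕ):ℤ) from rfl, zpow_natCast, pow_two, Units.val_mul ,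
          ← Units.val_mul, coe_M2 ζ hζ M hM, hu]
    · rcases field_cases ζ hζ γ with rfl | rfl | rfl | rfl
      · exact absurd (by linear_combination hbg + h2) (one_ne_zero (α := F))
      · exact absurd (by linear_combination hbg) (one_ne_zero (α := F))
      · exact ⟨1, Units.ext (by rw [zpow_one, hu, hM])⟩
      · refine ⟨3, Units.ext ?_⟩
        rw [show (3:ℤ) = ((3:ℕ):ℤ) from rfl, zpow_natCast, pow_succ, pow_two,
          coe_M3 ζ hζ M hM, hu]
end M

lemma frob_coe (u : GL (Fin 3) F) :
    (↑(frobGL u) : Matrix (Fin 3) (Fin 3) F) = (↑u : Matrix (Fin 3) (Fin 3) F).map (· ^ 2) := by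
  simp [frobGL, Units.coe_mapEquiv, RingEquiv.mapMatrix_apply, frobeniusEquiv_apply,
    frobenius_def]
  rfl

lemma frob_gmat (β γ : F) :
    (gmat 1 β γ).map (· ^ 2) = gmat 1 (β ^ 2) (γ ^ 2) := by
  ext i j
  fin_cases i <;> fin_cases j <;>
    simp [gmat, Matrix.map_apply, Matrix.vecHead, Matrix.vecTail] <;> ring

lemma frob_sq : frobGL * frobGL = 1 := by
  apply MulEquiv.ext
  intro u
  have : frobGL (frobGL u) = u := by
    apply Units.ext
    rw [frob_coe, frob_coe]
    ext i j
    simp only [Matrix.map_apply]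
    rw [← pow_mul]
    exact hx4 _
  simpa using this

lemma frob_pow_odd {f : ℕ} (hf : Odd f) : frobGL ^ f = frobGL := by
  obtain ⟨j, rfl⟩ := hf
  rw [pow_succ, pow_mul, show frobGL ^ 2 = 1 by rw [pow_two, frob_sq], one_pow, one_mul]

lemma φ_even (f : ℕ) (m : ℤ) (hm : Even m) : φ f (Multiplicative.ofAdd m) = 1 := by
  obtain ⟨j, rfl⟩ := hm
  set a : MulAut (GL (Fin 3) F) := frobGL ^ f with ha
  have haa : a * a = 1 := by
    rw [ha, ← pow_add, ← two_mul, pow_mul, show frobGL ^ 2 = 1 by rw [pow_two, frob_sq],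
      one_pow]
  show a ^ (j + j : ℤ) = 1
  rw [zpow_add, ← (Commute.refl a).mul_zpow, haa, one_zpow]

lemma φ_odd {f : ℕ} (hf : Odd f) (m : ℤ) (hm : Odd m) : φ f (Multiplicative.ofAdd m) = frobGL := by
  obtain ⟨j, rfl⟩ := hm
  set a : MulAut (GL (Fin 3) F) := frobGL ^ f with ha
  show a ^ (2 * j + 1 : ℤ) = frobGL
  have h2j : a ^ (2 * j : ℤ) = 1 := by
    rw [show (2 * j : ℤ) = j + j by ring, zpow_add, ← (Commute.refl a).mul_zpow]
    rw [show a * a = 1 by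
      rw [ha, ← pow_add, ← two_mul, pow_mul, show frobGL ^ 2 = 1 by rw [pow_two, frob_sq],
        one_pow], one_zpow]
  rw [zpow_add, h2j, one_mul, zpow_one, ha, frob_pow_odd hf]

/-- In `GL₃(𝔽₄) ⋊ ℤ` (`q = 2^f`, `f` odd), let `C₄` be the cyclic subgroup of order 4
generated by `M = g(1,1,ζ₃)`, let `H8` be the subgroup `Q₈ ⋊ ℤ`, and let `C` be the subgroup
of pairs `(g(1,β,γ), n)` with `g(1,β,γ) ∈ C₄` iff `n` is even. Then `C` has index 2 in
`Q₈ ⋊ ℤ` and is generated by `(g(1,ζ₃,ζ₃),1)` and `(g(1,0,0),2)`. -/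
theorem stmt18 (f : ℕ) (hf : Odd f) (ζ : GaloisField 2 2) (hζ : ζ ^ 2 + ζ + 1 = 0)
    (M M' : GL (Fin 3) (GaloisField 2 2))
    (hM : (M : Matrix (Fin 3) (Fin 3) (GaloisField 2 2)) = gmat 1 1 ζ)
    (hM' : (M' : Matrix (Fin 3) (Fin 3) (GaloisField 2 2)) = gmat 1 ζ ζ)
    (H8 C : Subgroup (SemidirectProduct _ (Multiplicative ℤ) (φ f)))
    (hH8 : (H8 : Set (SemidirectProduct _ (Multiplicative ℤ) (φ f)))
      = {p | p.left ∈ Q8set})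
    (hC : (C : Set (SemidirectProduct _ (Multiplicative ℤ) (φ f)))
      = {p | p.left ∈ Q8set ∧
          ((Even (Multiplicative.toAdd p.right) ∧ p.left ∈ Subgroup.zpowers M) ∨
           (Odd (Multiplicative.toAdd p.right) ∧ p.left ∉ Subgroup.zpowers M))}) :
    C ≤ H8 ∧ C.relIndex H8 = 2 ∧
      C = Subgroup.closure {(⟨M', Multiplicative.ofAdd 1⟩ :
            SemidirectProduct _ (Multiplicative ℤ) (φ f)),
          ⟨1, Multiplicative.ofAdd 2⟩} := by
  classical
  have hCmem : ∀ p : SemidirectProduct _ (Multiplicative ℤ) (φ f),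
      p ∈ C ↔ (p.left ∈ Q8set ∧
        ((Even (Multiplicative.toAdd p.right) ∧ p.left ∈ Subgroup.zpowers M) ∨
         (Odd (Multiplicative.toAdd p.right) ∧ p.left ∉ Subgroup.zpowers M))) := by
    intro p
    rw [← SetLike.mem_coe, hC]
    exact Iff.rfl
  have hH8mem : ∀ p : SemidirectProduct _ (Multiplicative ℤ) (φ f),
      p ∈ H8 ↔ p.left ∈ Q8set := by
    intro p
    rw [← SetLike.mem_coe, hH8]
    exact Iff.rfl
  have hM'Q8 : M' ∈ Q8set := ⟨ζ, ζ, hM', by linear_combination (2-ζ)*hζ - h2⟩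
  have h1Q8 : (1 : GL (Fin 3) (GaloisField 2 2)) ∈ Q8set :=
    ⟨0, 0, by rw [Units.val_one, gmat_one], by ring⟩
  have hM'not : M' ∉ Subgroup.zpowers M := by
    rw [mem_zpowers_M_iff ζ hζ M hM M' ζ ζ hM' (by linear_combination (2-ζ)*hζ - h2)]
    rintro (h | h)
    exacts [hz0 ζ hζ h, hz1 ζ hζ h]
  -- part 1
  have hle : C ≤ H8 := fun p hp => (hH8mem p).2 ((hCmem p).1 hp).1
  refine ⟨hle, ?_, ?_⟩
  -- part 2 : index
  · rw [Subgroup.relIndex, Subgroup.index_eq_two_iff]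
    have ha8 : (⟨1, Multiplicative.ofAdd 1⟩ :
        SemidirectProduct _ (Multiplicative ℤ) (φ f)) ∈ H8 := (hH8mem _).2 h1Q8
    refine ⟨⟨⟨1, Multiplicative.ofAdd 1⟩, ha8⟩, ?_⟩
    rintro ⟨p, hp8⟩
    have hb8 : p.left ∈ Q8set := (hH8mem p).1 hp8
    set n := Multiplicative.toAdd p.right with hn
    have hpt : p * (⟨1, Multiplicative.ofAdd 1⟩ :
        SemidirectProduct _ (Multiplicative ℤ) (φ f)) =
        ⟨p.left, p.right * Multiplicative.ofAdd 1⟩ := by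
      ext <;> simp
    have hAiff : ((⟨p, hp8⟩ * ⟨⟨1, Multiplicative.ofAdd 1⟩, ha8⟩ : H8) : H8) ∈
        C.subgroupOf H8 ↔
        ((Even (n+1) ∧ p.left ∈ Subgroup.zpowers M) ∨
         (Odd (n+1) ∧ p.left ∉ Subgroup.zpowers M)) := by
      rw [Subgroup.mem_subgroupOf]
      show (p * (⟨1, Multiplicative.ofAdd 1⟩ :
        SemidirectProduct _ (Multiplicative ℤ) (φ f))) ∈ C ↔ _
      rw [hpt, hCmem]
      have ht : Multiplicative.toAdd (p.right * Multiplicative.ofAdd 1) = n + 1 := by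
        simp [hn]
      rw [show (⟨p.left, p.right * Multiplicative.ofAdd 1⟩ :
          SemidirectProduct _ (Multiplicative ℤ) (φ f)).left = p.left from rfl, ht]
      exact and_iff_right hb8
    have hBiff : (⟨p, hp8⟩ : H8) ∈ C.subgroupOf H8 ↔
        ((Even n ∧ p.left ∈ Subgroup.zpowers M) ∨
         (Odd n ∧ p.left ∉ Subgroup.zpowers M)) := by
      rw [Subgroup.mem_subgroupOf]
      show p ∈ C ↔ _
      rw [hCmem]
      exact and_iff_right hb8
    rw [xor_def, hAiff, hBiff]
    rcases em (p.left ∈ Subgroup.zpowers M) with hc | hc <;>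
      rcases Int.even_or_odd n with h | h <;>
      simp [hc, h, Int.even_add_one, ← Int.not_even_iff_odd, ← Int.not_odd_iff_even]
  -- part 3 : closure
  · set G := Subgroup.closure {(⟨M', Multiplicative.ofAdd 1⟩ :
        SemidirectProduct _ (Multiplicative ℤ) (φ f)), ⟨1, Multiplicative.ofAdd 2⟩} with hG
    have hxG : (⟨M', Multiplicative.ofAdd 1⟩ :
        SemidirectProduct _ (Multiplicative ℤ) (φ f)) ∈ G :=
      Subgroup.subset_closure (by simp)
    have hyG : (⟨1, Multiplicative.ofAdd 2⟩ :
        SemidirectProduct _ (Multiplicative ℤ) (φ f)) ∈ G :=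
      Subgroup.subset_closure (by simp)
    have hyy : SemidirectProduct.inr (φ := φ f) (Multiplicative.ofAdd (2:ℤ)) =
        ⟨1, Multiplicative.ofAdd 2⟩ := by
      ext <;> simp
    have hyyG : SemidirectProduct.inr (φ := φ f) (Multiplicative.ofAdd (2:ℤ)) ∈ G := by
      rw [hyy]; exact hyG
    have hM'1 : SemidirectProduct.inl M' *
        SemidirectProduct.inr (φ := φ f) (Multiplicative.ofAdd (1:ℤ)) ∈ G := by
      rw [← SemidirectProduct.mk_eq_inl_mul_inr]
      exact hxG
    have hxx : (⟨M', Multiplicative.ofAdd 1⟩ :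
          SemidirectProduct _ (Multiplicative ℤ) (φ f)) *
          ⟨M', Multiplicative.ofAdd 1⟩ =
        SemidirectProduct.inl M * ⟨1, Multiplicative.ofAdd 2⟩ := by
      apply SemidirectProduct.ext
      · show M' * (φ f (Multiplicative.ofAdd 1)) M' = M * (φ f 1) 1
        rw [φ_odd hf 1 odd_one, map_one, mul_one]
        apply Units.ext
        rw [Units.val_mul, frob_coe, hM', frob_gmat, gmat_mul, hM]
        exact gmat_congr (by linear_combination hζ - h2)
          (by linear_combination (ζ^2)*(ζ-1)*hζ + (ζ^2)*h2)
      · show Multiplicative.ofAdd 1 * Multiplicative.ofAdd 1 =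
          1 * Multiplicative.ofAdd 2
        simp [← ofAdd_add]
    have hinlM : SemidirectProduct.inl (φ := φ f) M ∈ G := by
      have h1 : SemidirectProduct.inl (φ := φ f) M =
          (⟨M', Multiplicative.ofAdd 1⟩ :
            SemidirectProduct _ (Multiplicative ℤ) (φ f)) *
            ⟨M', Multiplicative.ofAdd 1⟩ *
            (⟨1, Multiplicative.ofAdd 2⟩ :
            SemidirectProduct _ (Multiplicative ℤ) (φ f))⁻¹ := by
        rw [hxx, mul_inv_cancel_right]
      rw [h1]
      exact mul_mem (mul_mem hxG hxG) (inv_mem hyG)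
    apply le_antisymm
    · -- C ≤ G
      intro p hp
      obtain ⟨⟨β, γ, hpl, hbg⟩, hcase⟩ := (hCmem p).1 hp
      rcases hcase with ⟨⟨j, hj⟩, hmem⟩ | ⟨⟨j, hj⟩, hnot⟩
      · -- even case
        obtain ⟨k, hk⟩ := Subgroup.mem_zpowers_iff.1 hmem
        rw [← SemidirectProduct.inl_left_mul_inr_right p]
        apply mul_mem
        · rw [← hk, map_zpow]
          exact zpow_mem hinlM k
        · have hpr : p.right = (Multiplicative.ofAdd (2:ℤ)) ^ j := by
            apply Multiplicative.toAdd.injective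
            rw [toAdd_zpow, toAdd_ofAdd, smul_eq_mul, hj]
            ring
          rw [hpr, map_zpow]
          exact zpow_mem hyyG j
      · -- odd case
        have hβ : ¬ (β = 0 ∨ β = 1) :=
          fun h => hnot ((mem_zpowers_M_iff ζ hζ M hM p.left β γ hpl hbg).2 h)
        push_neg at hβ
        have hpr : SemidirectProduct.inr (φ := φ f) p.right =
            SemidirectProduct.inr (φ := φ f) (Multiplicative.ofAdd (1:ℤ)) *
              (SemidirectProduct.inr (φ := φ f) (Multiplicative.ofAdd (2:ℤ))) ^ j := by
          rw [← map_zpow, ← map_mul]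
          congr 1
          apply Multiplicative.toAdd.injective
          rw [toAdd_mul, toAdd_zpow,
            toAdd_ofAdd, toAdd_ofAdd, smul_eq_mul, hj]
          ring
        have main : ∀ W : GL (Fin 3) (GaloisField 2 2),
            SemidirectProduct.inl (φ := φ f) W ∈ G → p.left = W * M' → p ∈ G := by
          intro W hW hpleq
          rw [← SemidirectProduct.inl_left_mul_inr_right p, hpleq, hpr, map_mul]
          have hassoc : SemidirectProduct.inl (φ := φ f) W *
              SemidirectProduct.inl M' *
              (SemidirectProduct.inr (Multiplicative.ofAdd (1:ℤ)) *
                SemidirectProduct.inr (Multiplicative.ofAdd (2:ℤ)) ^ j) =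
              SemidirectProduct.inl W *
                ((SemidirectProduct.inl M' *
                  SemidirectProduct.inr (Multiplicative.ofAdd (1:ℤ))) *
                  SemidirectProduct.inr (Multiplicative.ofAdd (2:ℤ)) ^ j) := by
            simp only [mul_assoc]
          rw [hassoc]
          exact mul_mem hW (mul_mem hM'1 (zpow_mem hyyG j))
        have hβ3 : β ^ 3 = 1 := by
          rcases field_cases ζ hζ β with h | h | h | h
          · exact absurd h hβ.1
          · exact absurd h hβ.2
          · rw [h]; exact hz3 ζ hζ
          · rw [h]; linear_combination (ζ+2)*hζ - h2
        have hγcases : γ = ζ ∨ γ = ζ + 1 := by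
          rw [hβ3] at hbg
          rcases field_cases ζ hζ γ with h | h | h | h
          · rw [h] at hbg
            exact absurd (by linear_combination hbg + h2) (one_ne_zero (α := F))
          · rw [h] at hbg
            exact absurd (by linear_combination hbg) (one_ne_zero (α := F))
          · exact Or.inl h
          · exact Or.inr h
        have hβcases : β = ζ ∨ β = ζ + 1 := by
          rcases field_cases ζ hζ β with h | h | h | h
          · exact absurd h hβ.1
          · exact absurd h hβ.2
          · exact Or.inl h
          · exact Or.inr h
        have hcMM' : ((M * M' : GL (Fin 3) F) : Matrix (Fin 3) (Fin 3) F)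
            = gmat 1 (ζ+1) (ζ+1) := by
          rw [Units.val_mul, hM, hM', gmat_mul]
          exact gmat_congr (by ring) (by linear_combination hζ - h2)
        have hcM2M' : ((M * M * M' : GL (Fin 3) F) : Matrix (Fin 3) (Fin 3) F)
            = gmat 1 ζ (ζ+1) := by
          rw [Units.val_mul, coe_M2 ζ hζ M hM, hM', gmat_mul]
          exact gmat_congr (by ring) (by ring)
        have hcM3M' : ((M * M * M * M' : GL (Fin 3) F) : Matrix (Fin 3) (Fin 3) F)
            = gmat 1 (ζ+1) ζ := by
          rw [Units.val_mul, coe_M3 ζ hζ M hM, hM', gmat_mul]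
          exact gmat_congr (by ring) (by linear_combination hζ)
        rcases hβcases with hb | hb <;> rcases hγcases with hg | hg
        · -- (ζ, ζ) : p.left = M'
          exact main 1 (by rw [map_one]; exact one_mem G)
            (Units.ext (by rw [hpl, hb, hg, one_mul, hM']))
        · -- (ζ, ζ+1) : p.left = M*M*M'
          exact main (M*M) (by rw [map_mul]; exact mul_mem hinlM hinlM)
            (Units.ext (by rw [hpl, hb, hg, hcM2M']))
        · -- (ζ+1, ζ) : p.left = M*M*M*M'
          exact main (M*M*M)
            (by rw [map_mul, map_mul]; exact mul_mem (mul_mem hinlM hinlM) hinlM)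
            (Units.ext (by rw [hpl, hb, hg, hcM3M']))
        · -- (ζ+1, ζ+1) : p.left = M*M'
          exact main M hinlM (Units.ext (by rw [hpl, hb, hg, hcMM']))
    · -- G ≤ C
      rw [hG]
      apply Subgroup.closure_le _ |>.2
      rintro z hz
      rcases hz with rfl | hz
      · exact (hCmem _).2 ⟨hM'Q8, Or.inr ⟨odd_one, hM'not⟩⟩
      · rcases hz with rfl
        exact (hCmem _).2 ⟨h1Q8, Or.inl ⟨⟨1, by norm_num⟩, one_mem _⟩⟩
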